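/- Let f be analytic on the unit disk 𝔻 with |f(z)| < 1 for all z ∈ 𝔻, and let a_n denote its Taylor coefficients at 0. Then for every n ≥ 1, |a_n| ≤ 1 - |a_0|². -/

import Mathlib

open Metric Complex Filter FormalMultilinearSeries

lemma radius_ge_one (c : ℕ → ℂ)
    (h : ∀ r : ℝ, 0 < r → r < 1 →
      Tendsto (fun k => ‖c k‖ * r ^ k) atTop (nhds 0)) :
    1 ≤ (ofScalars ℂ c).radius := by
  refine ENNReal.le_of_forall_nnreal_lt fun r hr => ?_
  rw [ENNReal.coe_lt_one_iff] at hr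
  rcases eq_or_ne r 0 with rfl | hr0
  · simp
  have hrpos : (0:ℝ) < r := by positivity
  have hrlt : (r:ℝ) < 1 := by exact_mod_cast hr
  apply (ofScalars ℂ c).le_radius_of_tendsto (l := 0)
  have := h r hrpos hrlt
  simp only [ofScalars_norm]
  exact this

lemma hasFPS (c : ℕ → ℂ) (g : ℂ → ℂ)
    (h : ∀ z ∈ ball (0:ℂ) 1, HasSum (fun k => c k * z ^ k) (g z)) :
    HasFPowerSeriesOnBall g (ofScalars ℂ c) 0 1 := by
  have hrad : 1 ≤ (ofScalars ℂ c).radius := by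
    apply radius_ge_one
    intro r h0 h1
    have hz : (r:ℂ) ∈ ball (0:ℂ) 1 := by
      simp [Complex.norm_real, abs_of_pos h0, h1]
    have := (h r hz).summable.tendsto_atTop_zero.norm
    simpa [Complex.norm_real, abs_of_pos h0] using this
  refine ⟨hrad, one_pos, fun {y} hy => ?_⟩
  have hy' : y ∈ ball (0:ℂ) 1 := by
    rw [← ENNReal.coe_one, Metric.emetric_ball_nnreal, NNReal.coe_one] at hy
    exact hy
  have hc : ∀ m, (ofScalars ℂ c).coeff m = c m := by
    intro m
    rw [FormalMultilinearSeries.coeff, show (1 : Fin m → ℂ) = fun _ => (1:ℂ) from rfl,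
      ofScalars_apply_eq]
    simp
  simp only [FormalMultilinearSeries.apply_eq_pow_smul_coeff, hc, smul_eq_mul, zero_add]
  simpa [mul_comm] using h y hy'

open Metric Complex

lemma mobius_lt {b u : ℂ} (hb : ‖b‖ < 1) (hu : ‖u‖ < 1) :
    ‖u - b‖ < ‖1 - (starRingEnd ℂ) b * u‖ := by
  have h1 : Complex.normSq b < 1 := by
    have := Complex.sq_norm b ▸ (by nlinarith [norm_nonneg b] : ‖b‖^2 < 1)
    linarith [this]
  have h2 : Complex.normSq u < 1 := by
    have := Complex.sq_norm u ▸ (by nlinarith [norm_nonneg u] : ‖u‖^2 < 1)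
    linarith [this]
  have key : Complex.normSq (u - b) < Complex.normSq (1 - (starRingEnd ℂ) b * u) := by
    simp only [Complex.normSq_apply, Complex.sub_re, Complex.sub_im, Complex.mul_re,
      Complex.mul_im, Complex.one_re, Complex.one_im, Complex.conj_re, Complex.conj_im] at *
    nlinarith [sq_nonneg (b.re*u.re + b.im*u.im)]
  rw [Complex.norm_def, Complex.norm_def]
  exact Real.sqrt_lt_sqrt (Complex.normSq_nonneg _) key

lemma schwarz_pick_zero (H : ℂ → ℂ) (hd : DifferentiableOn ℂ H (ball (0:ℂ) 1))
    (hb : ∀ w ∈ ball (0:ℂ) 1, ‖H w‖ < 1) :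
    ‖deriv H 0‖ ≤ 1 - ‖H 0‖ ^ 2 := by
  have h01 : (0:ℂ) ∈ ball (0:ℂ) 1 := by simp
  set b := H 0 with hbdef
  have hb0 : ‖b‖ < 1 := hb 0 h01
  set G : ℂ → ℂ := fun w => (H w - b) / (1 - (starRingEnd ℂ) b * H w) with hG
  have hden : ∀ w ∈ ball (0:ℂ) 1, 1 - (starRingEnd ℂ) b * H w ≠ 0 := by
    intro w hw
    have := mobius_lt hb0 (hb w hw)
    intro h
    rw [h] at this
    simp only [norm_zero] at this
    exact absurd this (norm_nonneg _).not_gt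
  have hGdiff : DifferentiableOn ℂ G (ball (0:ℂ) 1) := by
    apply DifferentiableOn.div
    · exact hd.sub (differentiableOn_const b)
    · exact (differentiableOn_const 1).sub ((differentiableOn_const _).mul hd)
    · exact hden
  have hG0 : G 0 = 0 := by
    simp only [hG, ← hbdef, sub_self, zero_div]
  have hmaps : Set.MapsTo G (ball (0:ℂ) 1) (ball (G 0) 1) := by
    intro w hw
    rw [hG0]
    simp only [mem_ball, dist_zero_right]
    rw [hG]
    have hlt := mobius_lt hb0 (hb w hw)
    have hpos : 0 < ‖1 - (starRingEnd ℂ) b * H w‖ :=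
      lt_of_le_of_lt (norm_nonneg _) hlt
    rw [norm_div]
    exact (div_lt_one hpos).mpr hlt
  have hsch : ‖deriv G 0‖ ≤ 1 :=
    le_of_le_of_eq (Complex.norm_deriv_le_div_of_mapsTo_ball hGdiff (hmaps.mono_right ball_subset_closedBall) one_pos) (by norm_num)
  -- compute deriv G 0
  have hHd : HasDerivAt H (deriv H 0) 0 :=
    (hd.differentiableAt (isOpen_ball.mem_nhds h01)).hasDerivAt
  have hd1 : HasDerivAt (fun w => H w - b) (deriv H 0) 0 := hHd.sub_const b
  have hd2 : HasDerivAt (fun w => 1 - (starRingEnd ℂ) b * H w)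
      (-((starRingEnd ℂ) b * deriv H 0)) 0 := by
    simpa using ((hHd.const_mul ((starRingEnd ℂ) b)).const_sub 1)
  have hden0 : (1 - (starRingEnd ℂ) b * H 0) ≠ 0 := hden 0 h01
  have hGd : HasDerivAt G
      ((deriv H 0 * (1 - (starRingEnd ℂ) b * H 0) -
        (H 0 - b) * (-((starRingEnd ℂ) b * deriv H 0))) / (1 - (starRingEnd ℂ) b * H 0) ^ 2) 0 :=
    hd1.div hd2 hden0
  have hGderiv : deriv G 0 = deriv H 0 / (1 - (starRingEnd ℂ) b * b) := by
    rw [hGd.deriv, ← hbdef]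
    rw [sub_self, zero_mul, sub_zero, sq]
    rw [mul_div_assoc]
    congr 1
    field_simp
  have habs : ‖deriv G 0‖ = ‖deriv H 0‖ / (1 - ‖b‖ ^ 2) := by
    rw [hGderiv, norm_div]
    congr 1
    have : (starRingEnd ℂ) b * b = (Complex.normSq b : ℂ) := by
      rw [mul_comm, Complex.mul_conj]
    rw [this, ← Complex.ofReal_one, ← Complex.ofReal_sub, Complex.norm_real, Real.norm_eq_abs,
      Complex.sq_norm]
    rw [_root_.abs_of_nonneg (by nlinarith [Complex.sq_norm b, norm_nonneg b] : (0:ℝ) ≤ 1 - normSq b)]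
  have hpos : 0 < 1 - ‖b‖ ^ 2 := by nlinarith [norm_nonneg b]
  rw [habs, div_le_one hpos] at hsch
  exact hsch


/-- If `f(z) = Σ aₙ zⁿ` is analytic on the unit disk with `|f| < 1`,
then `|aₙ| ≤ 1 - |a₀|²` for every `n ≥ 1`. -/
theorem coeff_bound (a : ℕ → ℂ) (f : ℂ → ℂ)
    (hf : ∀ z ∈ Metric.ball (0 : ℂ) 1, HasSum (fun n => a n * z ^ n) (f z))
    (hb : ∀ z ∈ Metric.ball (0 : ℂ) 1, ‖f z‖ < 1)
    (n : ℕ) (hn : 1 ≤ n) :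
    ‖a n‖ ≤ 1 - ‖a 0‖ ^ 2 := by
  have hn0 : (n:ℝ) ≠ 0 := by positivity
  have hnpos : 0 < n := hn
  set q := ofScalars ℂ (fun k => a (n*k)) with hq
  have hqrad : 1 ≤ q.radius := by
    apply radius_ge_one
    intro r h0 h1
    set ρ := r ^ (1/(n:ℝ)) with hρ
    have hρpos : 0 < ρ := Real.rpow_pos_of_pos h0 _
    have hρlt : ρ < 1 := Real.rpow_lt_one h0.le h1 (by positivity)
    have hz : ((ρ:ℝ):ℂ) ∈ ball (0:ℂ) 1 := by
      simp [Complex.norm_real, abs_of_pos hρpos, hρlt]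
    have h2 := (hf ρ hz).summable.tendsto_atTop_zero.norm
    simp only [norm_mul, norm_pow, Complex.norm_real, Real.norm_eq_abs,
      abs_of_pos hρpos] at h2
    have hmono : Filter.Tendsto (fun k => n*k) Filter.atTop Filter.atTop :=
      Filter.tendsto_atTop_atTop.mpr fun b => ⟨b, fun k hk => le_trans hk (Nat.le_mul_of_pos_left k hnpos)⟩
    have h3 := h2.comp hmono
    have hρn : ρ ^ n = r := by
      rw [hρ, ← Real.rpow_natCast (r ^ (1/(n:ℝ))) n, ← Real.rpow_mul h0.le]
      field_simp
      simp
    have h3' : Filter.Tendsto (fun k => ‖a (n*k)‖ * r ^ k) Filter.atTop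
        (nhds ‖(0:ℂ)‖) := by
      convert h3 using 2 with k
      simp only [Function.comp_apply, pow_mul, hρn]
    simpa using h3'
  have hH : HasFPowerSeriesOnBall q.sum q 0 1 :=
    (q.hasFPowerSeriesOnBall (lt_of_lt_of_le one_pos hqrad)).mono one_pos hqrad
  have hc : ∀ m, q.coeff m = a (n*m) := by
    intro m
    rw [hq, FormalMultilinearSeries.coeff, show (1 : Fin m → ℂ) = fun _ => (1:ℂ) from rfl,
      ofScalars_apply_eq]
    simp
  set H := q.sum with hHdef
  have hHsum : ∀ w ∈ ball (0:ℂ) 1, HasSum (fun k => a (n*k) * w ^ k) (H w) := by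
    intro w hw
    have hw' : w ∈ Metric.eball (0:ℂ) 1 := by
      rw [← ENNReal.coe_one, Metric.emetric_ball_nnreal, NNReal.coe_one]
      exact hw
    have := hH.hasSum hw'
    simpa [FormalMultilinearSeries.apply_eq_pow_smul_coeff, hc, smul_eq_mul, mul_comm] using this
  -- |H w| < 1 on the ball, via the rotation trick
  have hHb : ∀ w ∈ ball (0:ℂ) 1, ‖H w‖ < 1 := by
    intro w hw
    obtain ⟨z, hz⟩ := IsAlgClosed.exists_pow_nat_eq w hnpos
    have hwabs : ‖w‖ < 1 := by simpa using hw
    have hzlt : ‖z‖ < 1 := by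
      by_contra hzge
      push_neg at hzge
      have : (1:ℝ) ≤ ‖w‖ := by
        calc (1:ℝ) ≤ ‖z‖ ^ n := one_le_pow₀ hzge
        _ = ‖z ^ n‖ := (norm_pow _ _).symm
        _ = ‖w‖ := by rw [hz]
      linarith
    set ω := Complex.exp (2 * Real.pi * Complex.I / n) with hω
    have hprim : IsPrimitiveRoot ω n := Complex.isPrimitiveRoot_exp n (by positivity)
    have hωabs : ‖ω‖ = 1 := by
      rw [hω, Complex.norm_exp]
      norm_num [Complex.div_re, Complex.mul_re, Complex.mul_im]
    have hmem : ∀ j : ℕ, ω ^ j * z ∈ ball (0:ℂ) 1 := by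
      intro j
      simp only [mem_ball_zero_iff, norm_mul, norm_pow, hωabs, one_pow, one_mul]
      exact hzlt
    set S := ∑ j ∈ Finset.range n, f (ω ^ j * z) with hSdef
    have hS : HasSum (fun m => ∑ j ∈ Finset.range n, a m * (ω ^ j * z) ^ m) S :=
      hasSum_sum fun j _ => hf _ (hmem j)
    have hterm : (fun m => ∑ j ∈ Finset.range n, a m * (ω ^ j * z) ^ m)
        = fun m => if n ∣ m then (n:ℂ) * (a m * z ^ m) else 0 := by
      funext m
      have hrw : ∀ j, a m * (ω ^ j * z) ^ m = a m * z ^ m * (ω ^ m) ^ j := by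
        intro j
        rw [mul_pow, ← pow_mul, ← pow_mul, mul_comm j m]
        ring
      simp only [hrw, ← Finset.mul_sum]
      by_cases hdvd : n ∣ m
      · rw [if_pos hdvd]
        have h1 : ω ^ m = 1 := (hprim.pow_eq_one_iff_dvd m).mpr hdvd
        simp only [h1, one_pow, Finset.sum_const, Finset.card_range, nsmul_eq_mul, mul_one]
        try ring
      · rw [if_neg hdvd]
        have h1 : ω ^ m ≠ 1 := fun h => hdvd ((hprim.pow_eq_one_iff_dvd m).mp h)
        rw [geom_sum_eq h1]
        have h2 : (ω ^ m) ^ n = 1 := by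
          rw [← pow_mul, mul_comm m n, pow_mul, hprim.pow_eq_one, one_pow]
        rw [h2]
        simp
    rw [hterm] at hS
    have hHw := (hHsum w hw).mul_left (n:ℂ)
    have hinj : Function.Injective (fun k : ℕ => n * k) :=
      fun x y h => by simpa [Nat.mul_left_cancel_iff hnpos] using h
    have hS2 : HasSum (fun m => if n ∣ m then (n:ℂ) * (a m * z ^ m) else 0) ((n:ℂ) * H w) := by
      have hcomp : ((fun m => if n ∣ m then (n:ℂ) * (a m * z ^ m) else 0) ∘ fun k => n * k)
          = fun k => (n:ℂ) * (a (n*k) * w ^ k) := by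
        funext k
        simp only [Function.comp_apply]
        rw [if_pos ⟨k, rfl⟩, pow_mul, hz]
      refine (Function.Injective.hasSum_iff hinj ?_).mp ?_
      · intro m hm
        rw [if_neg]
        intro ⟨k, hk⟩
        exact hm ⟨k, hk.symm⟩
      · rw [hcomp]
        exact hHw
    have hEq : (n:ℂ) * H w = S := hS2.unique hS
    have hSabs : ‖S‖ < n := by
      calc ‖S‖ ≤ ∑ j ∈ Finset.range n, ‖f (ω ^ j * z)‖ :=
            norm_sum_le _ _
      _ < ∑ _j ∈ Finset.range n, (1:ℝ) :=
            Finset.sum_lt_sum_of_nonempty (Finset.nonempty_range_iff.mpr (by omega)) fun j _ => hb _ (hmem j)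
      _ = n := by simp
    have : (n:ℝ) * ‖H w‖ < n * 1 := by
      rw [mul_one]
      calc (n:ℝ) * ‖H w‖ = ‖(n:ℂ) * H w‖ := by
            rw [norm_mul, Complex.norm_natCast]
      _ = ‖S‖ := by rw [hEq]
      _ < n := hSabs
    exact lt_of_mul_lt_mul_left this (by positivity)
  -- differentiability
  have hdiff : DifferentiableOn ℂ H (ball (0:ℂ) 1) := by
    have := hH.differentiableOn
    rwa [← ENNReal.coe_one, Metric.emetric_ball_nnreal, NNReal.coe_one] at this
  have hkey := schwarz_pick_zero H hdiff hHb
  -- identify H 0 and deriv H 0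
  have hH0 : H 0 = a 0 := by
    have h1 := hHsum 0 (by simp)
    have h2 : HasSum (fun k => a (n*k) * (0:ℂ) ^ k) (a 0) := by
      convert hasSum_single (f := fun k => a (n*k) * (0:ℂ) ^ k) 0 ?_ using 2
      · simp
      · intro k hk
        simp [zero_pow hk]
    exact h1.unique h2
  have hderiv : deriv H 0 = a n := by
    have := hH.hasFPowerSeriesAt.deriv
    rw [this]
    simpa using hc 1
  rwa [hH0, hderiv] at hkey
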